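/- Let M ≥ 1 and define h on the set 𝒳 = {X ∈ ℍ₊^M : tr(X) ≤ 1} of positive semidefinite Hermitian M×M matrices of trace at most 1 by h(X) = tr(X log X) + (1 − tr X) log(1 − tr X) (with the conventions 0 log 0 = 0). Then its convex conjugate over 𝒳, h*(Y) = max_{X ∈ 𝒳} [tr(YX) − h(X)], equals log(1 + tr(exp Y)) for every Hermitian matrix Y, and the maximizer is G(Y) = exp(Y)/(1 + tr(exp Y)). -/

import Mathlib

open scoped Matrix ComplexOrder

section aux1



lemma jensen_log {ι : Type*} (t : Finset ι) (w x : ι → ℝ)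
    (h0 : ∀ i ∈ t, 0 ≤ w i) (h1 : ∑ i ∈ t, w i = 1)
    (hx : ∀ i ∈ t, 0 < w i → 0 < x i) :
    ∑ i ∈ t, w i * Real.log (x i) ≤ Real.log (∑ i ∈ t, w i * x i) := by
  have hconc : ConcaveOn ℝ (Set.Ioi 0) Real.log := strictConcaveOn_log_Ioi.concaveOn
  have key := hconc.le_map_sum (t := t) (w := w)
    (p := fun i => if w i = 0 then 1 else x i) h0 h1 ?_
  · calc ∑ i ∈ t, w i * Real.log (x i)
        = ∑ i ∈ t, w i • Real.log (if w i = 0 then 1 else x i) := by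
          refine Finset.sum_congr rfl fun i hi => ?_
          by_cases h : w i = 0 <;> simp [h]
      _ ≤ Real.log (∑ i ∈ t, w i • (if w i = 0 then 1 else x i)) := key
      _ = Real.log (∑ i ∈ t, w i * x i) := by
          congr 1
          refine Finset.sum_congr rfl fun i hi => ?_
          by_cases h : w i = 0 <;> simp [h]
  · intro i hi
    by_cases h : w i = 0
    · simp [h]
    · simpa [h] using hx i hi (lt_of_le_of_ne (h0 i hi) (Ne.symm h))

lemma exists_pos_of_sum_one {ι : Type*} {t : Finset ι} {w : ι → ℝ}
    (h0 : ∀ i ∈ t, 0 ≤ w i) (h1 : ∑ i ∈ t, w i = 1) : ∃ i ∈ t, 0 < w i := by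
  by_contra h
  push_neg at h
  have : ∑ i ∈ t, w i = 0 :=
    Finset.sum_eq_zero fun i hi => le_antisymm (h i hi) (h0 i hi)
  rw [this] at h1; norm_num at h1

lemma logsum_ineq {ι : Type*} (t : Finset ι) (w x : ι → ℝ)
    (h0 : ∀ i ∈ t, 0 ≤ w i) (h1 : ∑ i ∈ t, w i = 1)
    (hx : ∀ i ∈ t, 0 < x i) :
    ∑ i ∈ t, w i * Real.log (x i) - ∑ i ∈ t, w i * Real.log (w i)
      ≤ Real.log (∑ i ∈ t, x i) := by
  set x' : ι → ℝ := fun i => if w i = 0 then 1 else x i / w i with hx'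
  have key := jensen_log t w x' h0 h1 ?_
  · have e1 : ∑ i ∈ t, w i * Real.log (x' i)
        = ∑ i ∈ t, w i * Real.log (x i) - ∑ i ∈ t, w i * Real.log (w i) := by
      rw [← Finset.sum_sub_distrib]
      refine Finset.sum_congr rfl fun i hi => ?_
      by_cases h : w i = 0
      · simp [hx', h]
      · have hw : 0 < w i := lt_of_le_of_ne (h0 i hi) (Ne.symm h)
        simp only [hx', if_neg h]
        rw [Real.log_div (ne_of_gt (hx i hi)) h]
        ring
    have e2 : ∑ i ∈ t, w i * x' i ≤ ∑ i ∈ t, x i := by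
      refine Finset.sum_le_sum fun i hi => ?_
      by_cases h : w i = 0
      · simp [h]; exact (hx i hi).le
      · simp only [hx', if_neg h]
        rw [mul_div_cancel₀ _ h]
    have hpos : 0 < ∑ i ∈ t, w i * x' i := by
      obtain ⟨i0, hi0, hwi0⟩ := exists_pos_of_sum_one h0 h1
      refine Finset.sum_pos' (fun i hi => ?_) ⟨i0, hi0, ?_⟩
      · by_cases h : w i = 0
        · simp [h]
        · have hw : 0 < w i := lt_of_le_of_ne (h0 i hi) (Ne.symm h)
          simp only [hx', if_neg h]
          have := hx i hi
          positivity
      · simp only [hx', if_neg (ne_of_gt hwi0)]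
        have := hx i0 hi0
        positivity
    calc ∑ i ∈ t, w i * Real.log (x i) - ∑ i ∈ t, w i * Real.log (w i)
        = ∑ i ∈ t, w i * Real.log (x' i) := e1.symm
      _ ≤ Real.log (∑ i ∈ t, w i * x' i) := key
      _ ≤ Real.log (∑ i ∈ t, x i) := Real.log_le_log hpos e2
  · intro i hi hw
    simp only [hx', if_neg (ne_of_gt hw)]
    exact div_pos (hx i hi) hw

lemma gibbs_scalar {M : ℕ} (p a : Fin M → ℝ) (c : Fin M → Fin M → ℝ)
    (hc0 : ∀ i j, 0 ≤ c i j) (hrow : ∀ i, ∑ j, c i j = 1) (hcol : ∀ j, ∑ i, c i j = 1)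
    (hp0 : ∀ i, 0 ≤ p i) (hpt : ∑ i, p i ≤ 1) :
    ∑ i, p i * (∑ j, c i j * a j) - (∑ i, p i * Real.log (p i))
      - (1 - ∑ i, p i) * Real.log (1 - ∑ i, p i)
      ≤ Real.log (1 + ∑ j, Real.exp (a j)) := by
  set b : Fin M → ℝ := fun i => ∑ j, c i j * Real.exp (a j) with hb
  have hbpos : ∀ i, 0 < b i := by
    intro i
    obtain ⟨j0, hj0, hcj0⟩ := exists_pos_of_sum_one (fun j _ => hc0 i j) (hrow i)
    exact Finset.sum_pos' (fun j _ => mul_nonneg (hc0 i j) (Real.exp_pos _).le)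
      ⟨j0, hj0, mul_pos hcj0 (Real.exp_pos _)⟩
  have step1 : ∀ i, ∑ j, c i j * a j ≤ Real.log (b i) := by
    intro i
    have := jensen_log Finset.univ (c i) (fun j => Real.exp (a j))
      (fun j _ => hc0 i j) (hrow i) (fun j _ _ => Real.exp_pos _)
    simpa [Real.log_exp] using this
  have step2 : ∑ i, p i * (∑ j, c i j * a j) ≤ ∑ i, p i * Real.log (b i) :=
    Finset.sum_le_sum fun i _ => mul_le_mul_of_nonneg_left (step1 i) (hp0 i)
  set t := ∑ i, p i with ht
  -- apply logsum over Option (Fin M)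
  have step3 := logsum_ineq (Finset.univ : Finset (Option (Fin M)))
    (fun o => o.elim (1 - t) p) (fun o => o.elim 1 b)
    (fun o _ => by cases o <;> simp [hp0, sub_nonneg.2 hpt])
    (by simp [Fintype.sum_option, ht])
    (fun o _ => by cases o <;> simp [hbpos])
  rw [Fintype.sum_option, Fintype.sum_option, Fintype.sum_option] at step3
  simp only [Option.elim] at step3
  have hsb : ∑ i, b i = ∑ j, Real.exp (a j) := by
    rw [hb, Finset.sum_comm]
    simp_rw [← Finset.sum_mul, hcol, one_mul]
  rw [hsb] at step3
  simp only [Real.log_one, mul_zero, zero_add] at step3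
  linarith

end aux1

section aux2
open Matrix Polynomial



variable {M : ℕ}

lemma det_smul_one_sub_conj (W : Matrix.unitaryGroup (Fin M) ℂ) (v : Fin M → ℂ) (z : ℂ) :
    Matrix.det (z • (1 : Matrix (Fin M) (Fin M) ℂ)
      - (W : Matrix (Fin M) (Fin M) ℂ) * Matrix.diagonal v * star (W : Matrix (Fin M) (Fin M) ℂ))
      = ∏ i, (z - v i) := by
  have h1 : (W : Matrix (Fin M) (Fin M) ℂ) * star (W : Matrix (Fin M) (Fin M) ℂ) = 1 :=
    Matrix.mem_unitaryGroup_iff.mp W.2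
  have key : z • (1 : Matrix (Fin M) (Fin M) ℂ)
        - (W : Matrix (Fin M) (Fin M) ℂ) * Matrix.diagonal v * star (W : Matrix (Fin M) (Fin M) ℂ)
      = (W : Matrix (Fin M) (Fin M) ℂ) * (z • (1 : Matrix (Fin M) (Fin M) ℂ) - Matrix.diagonal v)
        * star (W : Matrix (Fin M) (Fin M) ℂ) := by
    rw [Matrix.mul_sub, Matrix.sub_mul, Matrix.mul_smul, mul_one, Matrix.smul_mul, h1]
  rw [key, Matrix.det_mul, Matrix.det_mul]
  have h2 : (W : Matrix (Fin M) (Fin M) ℂ).det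
      * ((star (W : Matrix (Fin M) (Fin M) ℂ)).det) = 1 := by
    rw [← Matrix.det_mul, h1, Matrix.det_one]
  calc (W : Matrix (Fin M) (Fin M) ℂ).det
        * (z • (1 : Matrix (Fin M) (Fin M) ℂ) - Matrix.diagonal v).det
        * (star (W : Matrix (Fin M) (Fin M) ℂ)).det
      = (z • (1 : Matrix (Fin M) (Fin M) ℂ) - Matrix.diagonal v).det
        * ((W : Matrix (Fin M) (Fin M) ℂ).det
          * (star (W : Matrix (Fin M) (Fin M) ℂ)).det) := by ring
    _ = (z • (1 : Matrix (Fin M) (Fin M) ℂ) - Matrix.diagonal v).det := by rw [h2, mul_one]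
    _ = ∏ i, (z - v i) := by
        rw [Matrix.smul_one_eq_diagonal, Matrix.diagonal_sub, Matrix.det_diagonal]

lemma eig_sum_eq (V : Matrix.unitaryGroup (Fin M) ℂ) (d : Fin M → ℝ)
    {A : Matrix (Fin M) (Fin M) ℂ}
    (hAeq : A = (V : Matrix (Fin M) (Fin M) ℂ) * Matrix.diagonal (RCLike.ofReal ∘ d)
      * star (V : Matrix (Fin M) (Fin M) ℂ))
    (hA : A.IsHermitian) (f : ℝ → ℝ) :
    ∑ i, f (hA.eigenvalues i) = ∑ i, f (d i) := by
  set μ := hA.eigenvalues with hμ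
  have key : ∀ z : ℂ, ∏ i, (z - (RCLike.ofReal ∘ μ) i) = ∏ i, (z - (RCLike.ofReal ∘ d) i) := by
    intro z
    have e1 := det_smul_one_sub_conj hA.eigenvectorUnitary (RCLike.ofReal ∘ μ) z
    have e2 := det_smul_one_sub_conj V (RCLike.ofReal ∘ d) z
    rw [← Unitary.conjStarAlgAut_apply (S := ℂ), ← hA.spectral_theorem] at e1
    rw [← hAeq] at e2
    rw [← e1, ← e2]
  have hprodform : ∀ (g : Fin M → ℂ),
      ((Finset.univ.val.map g).map (fun a => X - C a)).prod = ∏ i, (X - C (g i)) := by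
    intro g
    rw [Multiset.map_map]
    exact (Finset.prod_eq_multiset_prod _ _).symm
  have hpoly : (∏ i, (X - C ((RCLike.ofReal ∘ μ) i : ℂ)))
      = ∏ i, (X - C ((RCLike.ofReal ∘ d) i : ℂ)) := by
    apply Polynomial.funext
    intro z
    simpa [Polynomial.eval_prod] using key z
  have h2 : Finset.univ.val.map (RCLike.ofReal ∘ μ : Fin M → ℂ)
      = Finset.univ.val.map (RCLike.ofReal ∘ d : Fin M → ℂ) := by
    have := congrArg Polynomial.roots
      ((hprodform (RCLike.ofReal ∘ μ)).trans (hpoly.trans (hprodform (RCLike.ofReal ∘ d)).symm))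
    rwa [Polynomial.roots_multiset_prod_X_sub_C, Polynomial.roots_multiset_prod_X_sub_C] at this
  have hR : Finset.univ.val.map μ = Finset.univ.val.map d := by
    apply Multiset.map_injective (Complex.ofReal_injective)
    have hco : (RCLike.ofReal : ℝ → ℂ) = Complex.ofReal := rfl
    rw [Multiset.map_map, Multiset.map_map, ← hco]
    exact h2
  have hms : ∀ (q : Fin M → ℝ), ∑ i, f (q i) = ((Finset.univ.val.map q).map f).sum := by
    intro q
    rw [Multiset.map_map]
    exact Finset.sum_eq_multiset_sum _ _
  rw [hms, hms, hR]




variable {M : ℕ}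

lemma trace_unitary_conj (W : Matrix.unitaryGroup (Fin M) ℂ) (B : Matrix (Fin M) (Fin M) ℂ) :
    ((W : Matrix (Fin M) (Fin M) ℂ) * B * star (W : Matrix (Fin M) (Fin M) ℂ)).trace
      = B.trace := by
  rw [Matrix.trace_mul_cycle, Matrix.mem_unitaryGroup_iff'.mp W.2, Matrix.one_mul]

lemma exp_hermitian_decomp (Y : Matrix (Fin M) (Fin M) ℂ) (hY : Y.IsHermitian) :
    NormedSpace.exp Y = (hY.eigenvectorUnitary : Matrix (Fin M) (Fin M) ℂ)
      * Matrix.diagonal (RCLike.ofReal ∘ fun i => Real.exp (hY.eigenvalues i))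
      * star (hY.eigenvectorUnitary : Matrix (Fin M) (Fin M) ℂ) := by
  have h2 := Matrix.mem_unitaryGroup_iff'.mp hY.eigenvectorUnitary.2
  have hinv : (hY.eigenvectorUnitary : Matrix (Fin M) (Fin M) ℂ)⁻¹
      = star (hY.eigenvectorUnitary : Matrix (Fin M) (Fin M) ℂ) :=
    Matrix.inv_eq_left_inv h2
  have hunit : IsUnit (hY.eigenvectorUnitary : Matrix (Fin M) (Fin M) ℂ) :=
    isUnit_iff_exists.mpr ⟨star (hY.eigenvectorUnitary : Matrix (Fin M) (Fin M) ℂ),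
      Matrix.mem_unitaryGroup_iff.mp hY.eigenvectorUnitary.2, h2⟩
  have key := Matrix.exp_conj (hY.eigenvectorUnitary : Matrix (Fin M) (Fin M) ℂ)
    (Matrix.diagonal (RCLike.ofReal ∘ hY.eigenvalues)) hunit
  rw [hinv] at key
  conv_lhs => rw [hY.spectral_theorem, Unitary.conjStarAlgAut_apply]
  have hdiag : NormedSpace.exp (RCLike.ofReal ∘ hY.eigenvalues : Fin M → ℂ)
      = (RCLike.ofReal ∘ fun i => Real.exp (hY.eigenvalues i) : Fin M → ℂ) := by
    funext i
    rw [Pi.coe_exp]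
    show NormedSpace.exp ((hY.eigenvalues i : ℝ) : ℂ) = ((Real.exp (hY.eigenvalues i) : ℝ) : ℂ)
    rw [← Complex.exp_eq_exp_ℂ, ← Complex.ofReal_exp]
  rw [key, Matrix.exp_diagonal, hdiag]

lemma unitary_col_normSq_sum (W : Matrix.unitaryGroup (Fin M) ℂ) (j : Fin M) :
    ∑ i, Complex.normSq ((W : Matrix (Fin M) (Fin M) ℂ) i j) = 1 := by
  have h2 : star (W : Matrix (Fin M) (Fin M) ℂ) * (W : Matrix (Fin M) (Fin M) ℂ) = 1 :=
    Matrix.mem_unitaryGroup_iff'.mp W.2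
  have := congrFun (congrFun h2 j) j
  rw [Matrix.mul_apply] at this
  simp only [Matrix.star_apply, Matrix.one_apply_eq] at this
  apply Complex.ofReal_injective
  push_cast
  rw [← this]
  refine Finset.sum_congr rfl fun i _ => ?_
  rw [Complex.normSq_eq_conj_mul_self, Complex.star_def]

lemma unitary_row_normSq_sum (W : Matrix.unitaryGroup (Fin M) ℂ) (i : Fin M) :
    ∑ j, Complex.normSq ((W : Matrix (Fin M) (Fin M) ℂ) i j) = 1 := by
  have h1 : (W : Matrix (Fin M) (Fin M) ℂ) * star (W : Matrix (Fin M) (Fin M) ℂ) = 1 :=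
    Matrix.mem_unitaryGroup_iff.mp W.2
  have := congrFun (congrFun h1 i) i
  rw [Matrix.mul_apply] at this
  simp only [Matrix.star_apply, Matrix.one_apply_eq] at this
  apply Complex.ofReal_injective
  push_cast
  rw [← this]
  refine Finset.sum_congr rfl fun j _ => ?_
  rw [Complex.star_def, Complex.mul_conj]

lemma trace_diag_conj_diag (W : Matrix.unitaryGroup (Fin M) ℂ) (a p : Fin M → ℝ) :
    (Matrix.diagonal (RCLike.ofReal ∘ a) * (W : Matrix (Fin M) (Fin M) ℂ)
      * Matrix.diagonal (RCLike.ofReal ∘ p) * star (W : Matrix (Fin M) (Fin M) ℂ)).trace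
    = ((∑ i, ∑ j, a i * p j * Complex.normSq ((W : Matrix (Fin M) (Fin M) ℂ) i j) : ℝ) : ℂ) := by
  have entry : ∀ i : Fin M,
      ((Matrix.diagonal (RCLike.ofReal ∘ a) * (W : Matrix (Fin M) (Fin M) ℂ)
        * Matrix.diagonal (RCLike.ofReal ∘ p) * star (W : Matrix (Fin M) (Fin M) ℂ)
          : Matrix (Fin M) (Fin M) ℂ) i i)
      = ∑ j, ((a i : ℂ) * (W : Matrix (Fin M) (Fin M) ℂ) i j * (p j : ℂ)
          * star ((W : Matrix (Fin M) (Fin M) ℂ) i j)) := by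
    intro i
    rw [Matrix.mul_apply]
    refine Finset.sum_congr rfl fun j _ => ?_
    rw [Matrix.mul_diagonal, Matrix.diagonal_mul, Matrix.star_apply]
    rfl
  calc (Matrix.diagonal (RCLike.ofReal ∘ a) * (W : Matrix (Fin M) (Fin M) ℂ)
      * Matrix.diagonal (RCLike.ofReal ∘ p) * star (W : Matrix (Fin M) (Fin M) ℂ)).trace
      = ∑ i, ∑ j, ((a i : ℂ) * (W : Matrix (Fin M) (Fin M) ℂ) i j * (p j : ℂ)
          * star ((W : Matrix (Fin M) (Fin M) ℂ) i j)) :=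
        Finset.sum_congr rfl fun i _ => entry i
    _ = ((∑ i, ∑ j, a i * p j
          * Complex.normSq ((W : Matrix (Fin M) (Fin M) ℂ) i j) : ℝ) : ℂ) := by
        push_cast
        refine Finset.sum_congr rfl fun i _ => Finset.sum_congr rfl fun j _ => ?_
        have hws : (W : Matrix (Fin M) (Fin M) ℂ) i j * star ((W : Matrix (Fin M) (Fin M) ℂ) i j)
            = ((Complex.normSq ((W : Matrix (Fin M) (Fin M) ℂ) i j) : ℝ) : ℂ) := by
          rw [Complex.star_def, Complex.mul_conj]
        linear_combination ((a i : ℂ) * (p j : ℂ)) * hws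

end aux2

/-- Modified von Neumann entropy `h(X) = tr(X log X) + (1 - tr X) log (1 - tr X)`,
defined via the eigenvalues of a Hermitian matrix (junk value `0` otherwise),
with the convention `0 log 0 = 0` (which `Real.log 0 = 0` provides). -/
noncomputable def vnEntropy {M : ℕ} (X : Matrix (Fin M) (Fin M) ℂ) : ℝ :=
  if h : X.IsHermitian then
    (∑ i, h.eigenvalues i * Real.log (h.eigenvalues i)) +
      (1 - X.trace.re) * Real.log (1 - X.trace.re)
  else 0

section helper
variable {M : ℕ}

lemma trace_unitary_conj_diag (W : Matrix.unitaryGroup (Fin M) ℂ) (d : Fin M → ℝ) :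
    ((W : Matrix (Fin M) (Fin M) ℂ) * Matrix.diagonal (RCLike.ofReal ∘ d)
      * star (W : Matrix (Fin M) (Fin M) ℂ)).trace = ((∑ i, d i : ℝ) : ℂ) := by
  rw [Matrix.trace_mul_cycle, Matrix.mem_unitaryGroup_iff'.mp W.2, Matrix.one_mul,
    Matrix.trace_diagonal]
  push_cast
  rfl

end helper


theorem stmt13 {M : ℕ} (hM : 1 ≤ M) (Y : Matrix (Fin M) (Fin M) ℂ)
    (hY : Y.IsHermitian) :
    IsGreatest
      ((fun X : Matrix (Fin M) (Fin M) ℂ => (Y * X).trace.re - vnEntropy X) ''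
        {X | X.PosSemidef ∧ X.trace.re ≤ 1})
      (Real.log (1 + (NormedSpace.exp Y).trace.re)) ∧
    ((1 + (NormedSpace.exp Y).trace.re : ℂ)⁻¹ • NormedSpace.exp Y) ∈
      {X : Matrix (Fin M) (Fin M) ℂ | X.PosSemidef ∧ X.trace.re ≤ 1} ∧
    (Y * ((1 + (NormedSpace.exp Y).trace.re : ℂ)⁻¹ • NormedSpace.exp Y)).trace.re -
        vnEntropy ((1 + (NormedSpace.exp Y).trace.re : ℂ)⁻¹ • NormedSpace.exp Y) =
      Real.log (1 + (NormedSpace.exp Y).trace.re) := by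
  classical
  have hexp := exp_hermitian_decomp Y hY
  have htrE : (NormedSpace.exp Y).trace = ((∑ i, Real.exp (hY.eigenvalues i) : ℝ) : ℂ) := by
    rw [hexp]; exact trace_unitary_conj_diag _ _
  have hSre : (NormedSpace.exp Y).trace.re = ∑ i, Real.exp (hY.eigenvalues i) := by
    rw [htrE, Complex.ofReal_re]
  set Sr : ℝ := 1 + (NormedSpace.exp Y).trace.re with hSr
  have hsumexp : ∑ i, Real.exp (hY.eigenvalues i) = Sr - 1 := by rw [hSr, hSre]; ring
  have hSpos : 0 < Sr := by
    rw [hSr, hSre]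
    have : 0 ≤ ∑ i, Real.exp (hY.eigenvalues i) :=
      Finset.sum_nonneg fun i _ => (Real.exp_pos _).le
    linarith
  have hScast : (1 + ((NormedSpace.exp Y).trace.re : ℂ)) = ((Sr : ℝ) : ℂ) := by
    rw [hSr]; push_cast; ring
  set g : Fin M → ℝ := fun i => Real.exp (hY.eigenvalues i) / Sr with hg
  have hg0 : ∀ i, 0 ≤ g i := fun i => div_nonneg (Real.exp_pos _).le hSpos.le
  -- decomposition of G
  have hGdec : (1 + ((NormedSpace.exp Y).trace.re : ℂ))⁻¹ • NormedSpace.exp Y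
      = (hY.eigenvectorUnitary : Matrix (Fin M) (Fin M) ℂ)
        * Matrix.diagonal (RCLike.ofReal ∘ g)
        * star (hY.eigenvectorUnitary : Matrix (Fin M) (Fin M) ℂ) := by
    rw [hScast, hexp, ← Matrix.smul_mul, ← Matrix.mul_smul, ← Matrix.diagonal_smul]
    have hfun : ((Sr : ℝ) : ℂ)⁻¹ • (RCLike.ofReal ∘ fun i => Real.exp (hY.eigenvalues i))
        = (RCLike.ofReal ∘ g : Fin M → ℂ) := by
      funext i
      show ((Sr : ℝ) : ℂ)⁻¹ * ((Real.exp (hY.eigenvalues i) : ℝ) : ℂ) = ((g i : ℝ) : ℂ)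
      rw [hg]
      push_cast
      field_simp
    rw [hfun]
  have hGpsd : ((1 + ((NormedSpace.exp Y).trace.re : ℂ))⁻¹
      • NormedSpace.exp Y).PosSemidef := by
    rw [hGdec, Matrix.star_eq_conjTranspose]
    exact (Matrix.posSemidef_diagonal_iff.mpr fun i => by
      simpa using Complex.zero_le_real.mpr (hg0 i)).mul_mul_conjTranspose_same _
  have hGherm := hGpsd.1
  have htrG : ((1 + ((NormedSpace.exp Y).trace.re : ℂ))⁻¹
      • NormedSpace.exp Y).trace.re = ∑ i, g i := by
    rw [hGdec, trace_unitary_conj_diag, Complex.ofReal_re]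
  have hsumg : ∑ i, g i = (Sr - 1) / Sr := by
    rw [hg, ← Finset.sum_div, hsumexp]
  have htrG1 : 1 - ((1 + ((NormedSpace.exp Y).trace.re : ℂ))⁻¹
      • NormedSpace.exp Y).trace.re = 1 / Sr := by
    rw [htrG, hsumg]; field_simp; ring
  -- entropy of G
  have hentG : vnEntropy ((1 + ((NormedSpace.exp Y).trace.re : ℂ))⁻¹
      • NormedSpace.exp Y) = (∑ i, g i * Real.log (g i)) + (1 / Sr) * Real.log (1 / Sr) := by
    unfold vnEntropy
    rw [dif_pos hGherm, htrG1]
    congr 1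
    exact eig_sum_eq hY.eigenvectorUnitary g hGdec hGherm (fun x => x * Real.log x)
  -- trace of Y * G
  have hYG : Y * ((1 + ((NormedSpace.exp Y).trace.re : ℂ))⁻¹ • NormedSpace.exp Y)
      = (hY.eigenvectorUnitary : Matrix (Fin M) (Fin M) ℂ)
      * Matrix.diagonal (RCLike.ofReal ∘ fun i => hY.eigenvalues i * g i)
      * star (hY.eigenvectorUnitary : Matrix (Fin M) (Fin M) ℂ) := by
    have h2 : star (hY.eigenvectorUnitary : Matrix (Fin M) (Fin M) ℂ)
        * (hY.eigenvectorUnitary : Matrix (Fin M) (Fin M) ℂ) = 1 :=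
      Matrix.mem_unitaryGroup_iff'.mp hY.eigenvectorUnitary.2
    conv_lhs => rw [hGdec]
    conv_lhs => enter [1]; rw [hY.spectral_theorem, Unitary.conjStarAlgAut_apply]
    simp only [Matrix.mul_assoc]
    rw [show star (hY.eigenvectorUnitary : Matrix (Fin M) (Fin M) ℂ)
        * ((hY.eigenvectorUnitary : Matrix (Fin M) (Fin M) ℂ)
        * (Matrix.diagonal (RCLike.ofReal ∘ g)
          * star (hY.eigenvectorUnitary : Matrix (Fin M) (Fin M) ℂ)))
        = Matrix.diagonal (RCLike.ofReal ∘ g)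
          * star (hY.eigenvectorUnitary : Matrix (Fin M) (Fin M) ℂ) from by
      rw [← Matrix.mul_assoc, h2, Matrix.one_mul]]
    rw [show Matrix.diagonal (RCLike.ofReal ∘ hY.eigenvalues)
        * (Matrix.diagonal (RCLike.ofReal ∘ g)
          * star (hY.eigenvectorUnitary : Matrix (Fin M) (Fin M) ℂ))
        = Matrix.diagonal (RCLike.ofReal ∘ fun i => hY.eigenvalues i * g i)
          * star (hY.eigenvectorUnitary : Matrix (Fin M) (Fin M) ℂ) from by
      rw [← Matrix.mul_assoc, Matrix.diagonal_mul_diagonal,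
        show (fun i => (RCLike.ofReal ∘ hY.eigenvalues) i * (RCLike.ofReal ∘ g) i)
          = (RCLike.ofReal ∘ fun i => hY.eigenvalues i * g i : Fin M → ℂ) from by
        funext i
        show ((hY.eigenvalues i : ℝ) : ℂ) * ((g i : ℝ) : ℂ)
          = ((hY.eigenvalues i * g i : ℝ) : ℂ)
        push_cast
        ring]]
  have htrYG : (Y * ((1 + ((NormedSpace.exp Y).trace.re : ℂ))⁻¹
      • NormedSpace.exp Y)).trace.re = ∑ i, hY.eigenvalues i * g i := by
    rw [hYG, trace_unitary_conj_diag, Complex.ofReal_re]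
  -- the value at G
  have hval : (Y * ((1 + ((NormedSpace.exp Y).trace.re : ℂ))⁻¹
        • NormedSpace.exp Y)).trace.re
      - vnEntropy ((1 + ((NormedSpace.exp Y).trace.re : ℂ))⁻¹ • NormedSpace.exp Y)
      = Real.log Sr := by
    rw [htrYG, hentG]
    have hlogg : ∀ i, Real.log (g i) = hY.eigenvalues i - Real.log Sr := by
      intro i
      rw [hg]
      show Real.log (Real.exp (hY.eigenvalues i) / Sr) = _
      rw [Real.log_div (Real.exp_ne_zero _) hSpos.ne', Real.log_exp]
    have e1 : ∑ i, g i * Real.log (g i)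
        = ∑ i, hY.eigenvalues i * g i - (∑ i, g i) * Real.log Sr := by
      rw [Finset.sum_mul, ← Finset.sum_sub_distrib]
      refine Finset.sum_congr rfl fun i _ => ?_
      rw [hlogg i]; ring
    rw [e1, hsumg, Real.log_div one_ne_zero hSpos.ne', Real.log_one]
    field_simp
    ring
  -- G is in the set
  have hGmem : ((1 + ((NormedSpace.exp Y).trace.re : ℂ))⁻¹ • NormedSpace.exp Y)
      ∈ {X : Matrix (Fin M) (Fin M) ℂ | X.PosSemidef ∧ X.trace.re ≤ 1} := by
    refine ⟨hGpsd, ?_⟩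
    rw [htrG, hsumg, div_le_one hSpos]
    linarith
  -- upper bound
  have hub : ∀ v ∈ ((fun X : Matrix (Fin M) (Fin M) ℂ =>
      (Y * X).trace.re - vnEntropy X) '' {X | X.PosSemidef ∧ X.trace.re ≤ 1}),
      v ≤ Real.log Sr := by
    rintro v ⟨X, ⟨hXpsd, hXtr⟩, rfl⟩
    show (Y * X).trace.re - vnEntropy X ≤ Real.log Sr
    have hX : X.IsHermitian := hXpsd.1
    have hp0 : ∀ i, 0 ≤ hX.eigenvalues i := fun i => hXpsd.eigenvalues_nonneg i
    have htrX : X.trace.re = ∑ i, hX.eigenvalues i := by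
      conv_lhs => rw [hX.spectral_theorem, Unitary.conjStarAlgAut_apply]
      rw [trace_unitary_conj_diag, Complex.ofReal_re]
    have hpt : ∑ i, hX.eigenvalues i ≤ 1 := htrX ▸ hXtr
    -- the unitary W = V* U
    have hWmem : star (hY.eigenvectorUnitary : Matrix (Fin M) (Fin M) ℂ)
        * (hX.eigenvectorUnitary : Matrix (Fin M) (Fin M) ℂ)
        ∈ Matrix.unitaryGroup (Fin M) ℂ := by
      rw [Matrix.mem_unitaryGroup_iff, star_mul, star_star]
      calc star (hY.eigenvectorUnitary : Matrix (Fin M) (Fin M) ℂ)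
            * (hX.eigenvectorUnitary : Matrix (Fin M) (Fin M) ℂ)
            * ((star (hX.eigenvectorUnitary : Matrix (Fin M) (Fin M) ℂ))
              * (hY.eigenvectorUnitary : Matrix (Fin M) (Fin M) ℂ))
          = star (hY.eigenvectorUnitary : Matrix (Fin M) (Fin M) ℂ)
            * (((hX.eigenvectorUnitary : Matrix (Fin M) (Fin M) ℂ)
              * star (hX.eigenvectorUnitary : Matrix (Fin M) (Fin M) ℂ))
            * (hY.eigenvectorUnitary : Matrix (Fin M) (Fin M) ℂ)) := by
            simp only [Matrix.mul_assoc]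
        _ = 1 := by
            rw [Matrix.mem_unitaryGroup_iff.mp hX.eigenvectorUnitary.2, Matrix.one_mul,
              Matrix.mem_unitaryGroup_iff'.mp hY.eigenvectorUnitary.2]
    set W : Matrix.unitaryGroup (Fin M) ℂ :=
      ⟨star (hY.eigenvectorUnitary : Matrix (Fin M) (Fin M) ℂ)
        * (hX.eigenvectorUnitary : Matrix (Fin M) (Fin M) ℂ), hWmem⟩ with hWdef
    have hWcoe : (W : Matrix (Fin M) (Fin M) ℂ)
        = star (hY.eigenvectorUnitary : Matrix (Fin M) (Fin M) ℂ)
          * (hX.eigenvectorUnitary : Matrix (Fin M) (Fin M) ℂ) := rfl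
    -- Y * X = V (Da W Dp W*) V*
    have hYX : Y * X = (hY.eigenvectorUnitary : Matrix (Fin M) (Fin M) ℂ)
        * (Matrix.diagonal (RCLike.ofReal ∘ hY.eigenvalues) * (W : Matrix (Fin M) (Fin M) ℂ)
          * Matrix.diagonal (RCLike.ofReal ∘ hX.eigenvalues)
          * star (W : Matrix (Fin M) (Fin M) ℂ))
        * star (hY.eigenvectorUnitary : Matrix (Fin M) (Fin M) ℂ) := by
      conv_lhs => enter [1]; rw [hY.spectral_theorem, Unitary.conjStarAlgAut_apply]
      conv_lhs => enter [2]; rw [hX.spectral_theorem, Unitary.conjStarAlgAut_apply]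
      rw [hWcoe, star_mul, star_star]
      have hVV : (hY.eigenvectorUnitary : Matrix (Fin M) (Fin M) ℂ)
          * star (hY.eigenvectorUnitary : Matrix (Fin M) (Fin M) ℂ) = 1 :=
        Matrix.mem_unitaryGroup_iff.mp hY.eigenvectorUnitary.2
      simp only [Matrix.mul_assoc]
      rw [hVV, Matrix.mul_one]
    have htrYX : (Y * X).trace.re
        = ∑ i, ∑ j, hY.eigenvalues i * hX.eigenvalues j
            * Complex.normSq ((W : Matrix (Fin M) (Fin M) ℂ) i j) := by
      rw [hYX, trace_unitary_conj hY.eigenvectorUnitary,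
        trace_diag_conj_diag W hY.eigenvalues hX.eigenvalues, Complex.ofReal_re]
    -- entropy of X
    have hentX : vnEntropy X = (∑ i, hX.eigenvalues i * Real.log (hX.eigenvalues i))
        + (1 - ∑ i, hX.eigenvalues i) * Real.log (1 - ∑ i, hX.eigenvalues i) := by
      unfold vnEntropy
      rw [dif_pos hX, htrX]
    -- apply Gibbs
    set c : Fin M → Fin M → ℝ :=
      fun j i => Complex.normSq ((W : Matrix (Fin M) (Fin M) ℂ) i j) with hc
    have hgibbs := gibbs_scalar hX.eigenvalues hY.eigenvalues c
      (fun j i => Complex.normSq_nonneg _)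
      (fun j => unitary_col_normSq_sum W j)
      (fun i => unitary_row_normSq_sum W i)
      hp0 hpt
    have hmatch : ∑ i, ∑ j, hY.eigenvalues i * hX.eigenvalues j
          * Complex.normSq ((W : Matrix (Fin M) (Fin M) ℂ) i j)
        = ∑ j, hX.eigenvalues j * (∑ i, c j i * hY.eigenvalues i) := by
      rw [Finset.sum_comm]
      refine Finset.sum_congr rfl fun j _ => ?_
      rw [Finset.mul_sum]
      refine Finset.sum_congr rfl fun i _ => ?_
      show _ = hX.eigenvalues j * (Complex.normSq ((W : Matrix (Fin M) (Fin M) ℂ) i j)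
        * hY.eigenvalues i)
      ring
    rw [htrYX, hentX, hmatch]
    calc ∑ j, hX.eigenvalues j * (∑ i, c j i * hY.eigenvalues i)
          - ((∑ i, hX.eigenvalues i * Real.log (hX.eigenvalues i))
            + (1 - ∑ i, hX.eigenvalues i) * Real.log (1 - ∑ i, hX.eigenvalues i))
        = ∑ j, hX.eigenvalues j * (∑ i, c j i * hY.eigenvalues i)
          - (∑ i, hX.eigenvalues i * Real.log (hX.eigenvalues i))
          - (1 - ∑ i, hX.eigenvalues i) * Real.log (1 - ∑ i, hX.eigenvalues i) := by ring
      _ ≤ Real.log (1 + ∑ i, Real.exp (hY.eigenvalues i)) := hgibbs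
      _ = Real.log Sr := by rw [hsumexp]; ring_nf
  exact ⟨⟨⟨_, hGmem, hval⟩, hub⟩, hGmem, hval⟩
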